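/- Let M : ℝ → ℝ be a 2π-periodic function, integrable on [−π, π], with ∫_{−π}^{π} |M(x)| dx ≤ A for some A > 0, and define F(x) = ∫_{−π}^{π} M(x') H(x − x') dx'. Then for every nonzero integer k, the Fourier coefficient F̂_k = (1/√(2π)) ∫_{−π}^{π} F(x) e^{−ikx} dx satisfies |F̂_k| ≤ 2A/(√(2π) |k|); moreover F̂_k = 0 whenever k is even and nonzero. -/

import Mathlib

open Real Classical MeasureTheory

/-- The 2π-periodic Heaviside function: `H(x) = 1` for `x ∈ [2kπ, (2k+1)π)` and
`H(x) = 0` for `x ∈ [(2k−1)π, 2kπ)`, `k ∈ ℤ`. -/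
noncomputable def Hper (x : ℝ) : ℝ :=
  if ∃ k : ℤ, 2 * k * π ≤ x ∧ x < (2 * k + 1) * π then 1 else 0


lemma Hper_eq_indicator :
    Hper = Set.indicator (⋃ k : ℤ, Set.Ico (2*(k:ℝ)*π) ((2*k+1)*π)) (fun _ => 1) := by
  funext x
  simp [Hper, Set.indicator_apply, Set.mem_iUnion, Set.mem_Ico]

lemma measurable_Hper : Measurable Hper := by
  rw [Hper_eq_indicator]
  exact (measurable_const.indicator (MeasurableSet.iUnion fun k => measurableSet_Ico))

lemma Hper_nonneg (x : ℝ) : 0 ≤ Hper x := by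
  unfold Hper; split <;> norm_num

lemma Hper_le_one (x : ℝ) : Hper x ≤ 1 := by
  unfold Hper; split <;> norm_num

lemma Hper_periodic : Function.Periodic Hper (2*π) := by
  intro x
  unfold Hper
  congr 1
  apply propext
  constructor
  · rintro ⟨k, h1, h2⟩
    exact ⟨k - 1, by push_cast; constructor <;> nlinarith⟩
  · rintro ⟨k, h1, h2⟩
    exact ⟨k + 1, by push_cast; constructor <;> nlinarith⟩

lemma Hper_of_nonneg_lt {x : ℝ} (h1 : 0 ≤ x) (h2 : x < π) : Hper x = 1 := by
  unfold Hper
  rw [if_pos ⟨0, by push_cast; constructor <;> linarith⟩]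

lemma Hper_of_neg {x : ℝ} (h1 : -π ≤ x) (h2 : x < 0) : Hper x = 0 := by
  unfold Hper
  rw [if_neg]
  rintro ⟨k, hk1, hk2⟩
  have hπ := pi_pos
  have hkneg : (k:ℝ) < 0 := by nlinarith
  have hk' : k < 0 := by exact_mod_cast hkneg
  have hk2' : k + 1 ≤ 0 := Int.lt_iff_add_one_le.mp hk'
  have : (k:ℝ) + 1 ≤ 0 := by exact_mod_cast hk2'
  nlinarith

lemma exp_neg_I_int_pi (k : ℤ) : Complex.exp (-Complex.I * k * π) = (-1 : ℂ) ^ k := by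
  have h : (-Complex.I * k * π) = (-k : ℤ) * (π * Complex.I) := by push_cast; ring
  rw [h, Complex.exp_int_mul, Complex.exp_pi_mul_I, zpow_neg]
  have h2 : ((-1 : ℂ) ^ k) * ((-1 : ℂ) ^ k) = 1 := by
    rw [← zpow_add₀ (by norm_num : (-1:ℂ) ≠ 0)]
    exact Even.neg_one_zpow ⟨k, rfl⟩
  exact inv_eq_of_mul_eq_one_left h2

lemma Hper_mul_exp_intervalIntegrable (k : ℤ) (a b : ℝ) :
    IntervalIntegrable (fun u => (Hper u : ℂ) * Complex.exp (-Complex.I * k * u))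
      MeasureTheory.volume a b := by
  rw [intervalIntegrable_iff]
  apply Measure.integrableOn_of_bounded (M := 1) measure_Ioc_lt_top.ne ?_ ?_
  · apply AEStronglyMeasurable.mul
    · exact ((Complex.measurable_ofReal.comp measurable_Hper)).aestronglyMeasurable
    · exact (Complex.continuous_exp.comp (by continuity)).aestronglyMeasurable
  · filter_upwards with x
    rw [norm_mul]
    have h1 : ‖((Hper x : ℝ) : ℂ)‖ ≤ 1 := by
      rw [Complex.norm_real, Real.norm_eq_abs, abs_of_nonneg (Hper_nonneg x)]
      exact Hper_le_one x
    have h2 : ‖Complex.exp (-Complex.I * k * x)‖ = 1 := by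
      rw [Complex.norm_exp]
      norm_num [Complex.mul_re]
    rw [h2, mul_one]; exact h1

lemma Hper_int_eval (k : ℤ) (hk : k ≠ 0) :
    ∫ u in (-π)..π, (Hper u : ℂ) * Complex.exp (-Complex.I * k * u)
      = ((-1:ℂ)^k - 1) / (-Complex.I * k) := by
  have hπ := pi_pos
  have hc : (-Complex.I * k : ℂ) ≠ 0 := by
    simp [Complex.ext_iff, Complex.I]
    exact_mod_cast hk
  have h1 : ∫ u in (-π)..(0:ℝ), (Hper u : ℂ) * Complex.exp (-Complex.I * k * u) = 0 := by
    rw [intervalIntegral.integral_of_le (by linarith), integral_Ioc_eq_integral_Ioo,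
      setIntegral_congr_fun (g := fun _ => (0:ℂ)) measurableSet_Ioo
        (fun x hx => by rw [Hper_of_neg (le_of_lt hx.1) hx.2]; simp)]
    simp
  have h2 : ∫ u in (0:ℝ)..π, (Hper u : ℂ) * Complex.exp (-Complex.I * k * u)
      = ((-1:ℂ)^k - 1) / (-Complex.I * k) := by
    rw [intervalIntegral.integral_of_le (by linarith), integral_Ioc_eq_integral_Ioo,
      setIntegral_congr_fun (g := fun x : ℝ => Complex.exp (-Complex.I * k * x)) measurableSet_Ioo
        (fun x hx => by rw [Hper_of_nonneg_lt (le_of_lt hx.1) hx.2]; simp),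
      ← integral_Ioc_eq_integral_Ioo, ← intervalIntegral.integral_of_le (by linarith)]
    have := integral_exp_mul_complex (a := 0) (b := π) hc
    simp only [Complex.ofReal_zero, mul_zero, Complex.exp_zero] at this
    rw [this, exp_neg_I_int_pi]
  rw [← intervalIntegral.integral_add_adjacent_intervals (b := (0:ℝ))
    (Hper_mul_exp_intervalIntegrable k _ _) (Hper_mul_exp_intervalIntegrable k _ _), h1, h2, zero_add]

lemma Hper_mul_exp_periodic (k : ℤ) :
    Function.Periodic (fun u => (Hper u : ℂ) * Complex.exp (-Complex.I * k * u)) (2*π) := by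
  intro u
  simp only
  rw [Hper_periodic u]
  congr 1
  push_cast
  rw [mul_add, Complex.exp_add]
  have : Complex.exp (-Complex.I * k * (2*π)) = 1 := by
    have h : (-Complex.I * k * (2*(π:ℂ))) = (-k : ℤ) * (2 * π * Complex.I) := by push_cast; ring
    rw [h, Complex.exp_int_mul_two_pi_mul_I]
  rw [this, mul_one]

lemma inner_int (k : ℤ) (hk : k ≠ 0) (x' : ℝ) :
    (∫ x in (-π)..π, (Hper (x - x') : ℂ) * Complex.exp (-Complex.I * k * x))
      = Complex.exp (-Complex.I * k * x') * (((-1:ℂ)^k - 1) / (-Complex.I * k)) := by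
  have key : ∀ x : ℝ, (Hper (x - x') : ℂ) * Complex.exp (-Complex.I * k * x)
      = Complex.exp (-Complex.I * k * x') *
        ((Hper (x - x') : ℂ) * Complex.exp (-Complex.I * k * (x - x' : ℝ))) := by
    intro x
    have e : Complex.exp (-Complex.I*k*x') * Complex.exp (-Complex.I*k*((x:ℂ)-x'))
        = Complex.exp (-Complex.I*k*x) := by
      rw [← Complex.exp_add]; congr 1; ring
    push_cast
    linear_combination (-(Hper (x - x') : ℂ)) * e
  rw [intervalIntegral.integral_congr (g := fun x =>
      Complex.exp (-Complex.I * k * x') *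
        ((Hper (x - x') : ℂ) * Complex.exp (-Complex.I * k * (x - x' : ℝ))))
      (fun x _ => key x),
    intervalIntegral.integral_const_mul]
  congr 1
  rw [intervalIntegral.integral_comp_sub_right
    (fun u => (Hper u : ℂ) * Complex.exp (-Complex.I * k * u)) x']
  have hper2 := (Hper_mul_exp_periodic k).intervalIntegral_add_eq (-π - x') (-π)
  rw [show -π - x' + 2*π = π - x' by ring, show -π + 2*π = π by ring] at hper2
  rw [hper2, Hper_int_eval k hk]

lemma J_eq (M : ℝ → ℝ)
    (hint : IntervalIntegrable M MeasureTheory.volume (-π) π)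
    (F : ℝ → ℝ) (hF : ∀ x : ℝ, F x = ∫ x' in (-π)..π, M x' * Hper (x - x'))
    (k : ℤ) (hk : k ≠ 0) :
    (∫ x in (-π)..π, (F x : ℂ) * Complex.exp (-Complex.I * k * x))
      = (∫ x' in (-π)..π, (M x' : ℂ) * Complex.exp (-Complex.I * k * x'))
        * (((-1:ℂ)^k - 1) / (-Complex.I * k)) := by
  have hπ := pi_pos
  have hab : (-π : ℝ) ≤ π := by linarith
  set μ := MeasureTheory.volume.restrict (Set.Ioc (-π) π) with hμ
  haveI : IsFiniteMeasure μ := ⟨by rw [Measure.restrict_apply_univ]; exact measure_Ioc_lt_top⟩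
  have hMμ : Integrable M μ := by
    rw [intervalIntegrable_iff_integrableOn_Ioc_of_le hab] at hint
    exact hint
  -- step 1: rewrite each F x
  have hFx : ∀ x : ℝ, (F x : ℂ) * Complex.exp (-Complex.I * k * x)
      = ∫ x' in (-π)..π, (M x' : ℂ) * (Hper (x - x') : ℂ) * Complex.exp (-Complex.I * k * x) := by
    intro x
    rw [hF x, ← intervalIntegral.integral_ofReal (f := fun x' => M x' * Hper (x - x')),
      ← intervalIntegral.integral_mul_const]
    push_cast
    rfl
  simp_rw [hFx]
  -- step 2: convert to set integrals and swap
  rw [intervalIntegral.integral_of_le hab]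
  simp_rw [intervalIntegral.integral_of_le hab]
  have hswap :
      (∫ x, ∫ x', (M x' : ℂ) * (Hper (x - x') : ℂ) * Complex.exp (-Complex.I * k * x) ∂μ ∂μ)
        = ∫ x', ∫ x, (M x' : ℂ) * (Hper (x - x') : ℂ) * Complex.exp (-Complex.I * k * x) ∂μ ∂μ := by
    apply MeasureTheory.integral_integral_swap
    have hmeas : AEStronglyMeasurable
        (fun z : ℝ × ℝ => (M z.2 : ℂ) * (Hper (z.1 - z.2) : ℂ) * Complex.exp (-Complex.I * k * z.1))
        (μ.prod μ) := by
      apply AEStronglyMeasurable.mul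
      apply AEStronglyMeasurable.mul
      · exact (Complex.continuous_ofReal.comp_aestronglyMeasurable hMμ.aestronglyMeasurable.comp_snd)
      · exact ((Complex.measurable_ofReal.comp
          (measurable_Hper.comp (measurable_fst.sub measurable_snd))).aestronglyMeasurable)
      · exact (by continuity : Continuous fun z : ℝ × ℝ =>
          Complex.exp (-Complex.I * k * z.1)).aestronglyMeasurable
    have hbound : Integrable (fun z : ℝ × ℝ => (1:ℝ) * |M z.2|) (μ.prod μ) :=
      Integrable.mul_prod (integrable_const 1) hMμ.abs
    apply Integrable.mono' hbound hmeas
    filter_upwards with z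
    simp only [norm_mul, one_mul]
    have h2 : ‖Complex.exp (-Complex.I * k * z.1)‖ = 1 := by
      rw [Complex.norm_exp]
      norm_num [Complex.mul_re]
    rw [h2, mul_one, Complex.norm_real, Complex.norm_real, Real.norm_eq_abs, Real.norm_eq_abs,
      abs_of_nonneg (Hper_nonneg _)]
    calc |M z.2| * Hper (z.1 - z.2) ≤ |M z.2| * 1 :=
          mul_le_mul_of_nonneg_left (Hper_le_one _) (abs_nonneg _)
      _ = |M z.2| := mul_one _
  rw [hswap]
  -- step 3: inner integral
  have hinner : ∀ x' : ℝ,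
      (∫ x, (M x' : ℂ) * (Hper (x - x') : ℂ) * Complex.exp (-Complex.I * k * x) ∂μ)
        = (M x' : ℂ) * Complex.exp (-Complex.I * k * x') * (((-1:ℂ)^k - 1) / (-Complex.I * k)) := by
    intro x'
    simp_rw [mul_assoc ((M x' : ℝ) : ℂ)]
    rw [MeasureTheory.integral_const_mul]
    rw [show (∫ x, (Hper (x - x') : ℂ) * Complex.exp (-Complex.I * k * x) ∂μ)
        = ∫ x in (-π)..π, (Hper (x - x') : ℂ) * Complex.exp (-Complex.I * k * x) from
      (intervalIntegral.integral_of_le hab).symm]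
    rw [inner_int k hk x', mul_assoc]
  simp_rw [hinner]
  rw [← intervalIntegral.integral_of_le hab, intervalIntegral.integral_mul_const,
    intervalIntegral.integral_of_le hab]

theorem stmt_9 (M : ℝ → ℝ) (A : ℝ) (hA : 0 < A)
    (hper : ∀ x : ℝ, M (x + 2 * π) = M x)
    (hint : IntervalIntegrable M MeasureTheory.volume (-π) π)
    (habs : (∫ x in (-π)..π, |M x|) ≤ A)
    (F : ℝ → ℝ) (hF : ∀ x : ℝ, F x = ∫ x' in (-π)..π, M x' * Hper (x - x'))
    (k : ℤ) (hk : k ≠ 0) :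
    ‖((1 / Real.sqrt (2 * π) : ℂ) *
        ∫ x in (-π)..π, (F x : ℂ) * Complex.exp (-Complex.I * k * x))‖ ≤
      2 * A / (Real.sqrt (2 * π) * |(k : ℝ)|) ∧
    (Even k →
      (1 / Real.sqrt (2 * π) : ℂ) *
        (∫ x in (-π)..π, (F x : ℂ) * Complex.exp (-Complex.I * k * x)) = 0) := by
  have hπ := pi_pos
  have hs : 0 < Real.sqrt (2*π) := Real.sqrt_pos.mpr (by linarith)
  have hkR : (0:ℝ) < |(k:ℝ)| := by
    rw [abs_pos]
    exact_mod_cast hk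
  have hJ := J_eq M hint F hF k hk
  rw [hJ]
  set c := ((-1:ℂ)^k - 1) / (-Complex.I * k) with hc
  set IM := ∫ x' in (-π)..π, (M x' : ℂ) * Complex.exp (-Complex.I * k * x') with hIM
  constructor
  · have hIMle : ‖IM‖ ≤ A := by
      calc ‖IM‖ ≤ ∫ x in (-π)..π, ‖(M x : ℂ) * Complex.exp (-Complex.I * k * x)‖ :=
            intervalIntegral.norm_integral_le_integral_norm (by linarith)
        _ = ∫ x in (-π)..π, |M x| := by
            apply intervalIntegral.integral_congr
            intro x _
            show ‖(M x : ℂ) * Complex.exp (-Complex.I * k * x)‖ = |M x|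
            rw [norm_mul]
            have h2 : ‖Complex.exp (-Complex.I * k * x)‖ = 1 := by
              rw [Complex.norm_exp]
              norm_num [Complex.mul_re]
            rw [h2, mul_one, Complex.norm_real, Real.norm_eq_abs]
        _ ≤ A := habs
    have hcle : ‖c‖ ≤ 2 / |(k:ℝ)| := by
      rw [hc, norm_div]
      have hnum : ‖(-1:ℂ)^k - 1‖ ≤ 2 := by
        calc ‖(-1:ℂ)^k - 1‖ ≤ ‖(-1:ℂ)^k‖ + ‖(1:ℂ)‖ := norm_sub_le _ _
          _ = 2 := by rw [norm_zpow, norm_neg, norm_one, one_zpow]; norm_num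
      have hden : ‖(-Complex.I * k : ℂ)‖ = |(k:ℝ)| := by
        rw [norm_mul, norm_neg, Complex.norm_I, one_mul]
        exact_mod_cast Complex.norm_intCast k
      rw [hden]
      exact div_le_div_of_nonneg_right hnum hkR.le |>.trans_eq rfl
    have habs1 : ‖((1 / Real.sqrt (2 * π) : ℂ) * (IM * c))‖
        = (1 / Real.sqrt (2*π)) * (‖IM‖ * ‖c‖) := by
      rw [norm_mul, norm_mul, norm_div, norm_one, Complex.norm_real,
        Real.norm_eq_abs, abs_of_nonneg hs.le]
    rw [habs1]
    have : (1 / Real.sqrt (2*π)) * (‖IM‖ * ‖c‖) ≤ (1 / Real.sqrt (2*π)) * (A * (2 / |(k:ℝ)|)) := by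
      apply mul_le_mul_of_nonneg_left _ (by positivity)
      exact mul_le_mul hIMle hcle (norm_nonneg _) hA.le
    refine this.trans_eq ?_
    field_simp
  · intro hke
    have : (-1:ℂ)^k = 1 := Even.neg_one_zpow hke
    rw [hc, this]
    simp
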